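/- Let r ≥ 1, b ≥ 1, n ≥ 2^{r+1} be integers and q = 2^b. Viewing the matrix space F_q^{n×n} as a vector space over F₂ (by restriction of scalars along F₂ ⊆ F_q), the F₂-linear span of the set {M ∈ F_q^{n×n} : rank(M) = 2^r} of rank-2^r matrices is the whole space F_q^{n×n}. -/

import Mathlib

/-- For `q = 2^b`, the `F₂`-linear span of the set of rank-`2^r`
matrices in `F_q^{n×n}` (viewed as a vector space over `F₂ = ZMod 2` by restriction of
scalars) is the whole matrix space. -/
theorem stmt4 (r b n : ℕ) (hr : 1 ≤ r) (hb : 1 ≤ b) (hn : 2 ^ (r + 1) ≤ n) :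
    Submodule.span (ZMod 2)
      {M : Matrix (Fin n) (Fin n) (GaloisField 2 b) | M.rank = 2 ^ r} = ⊤ := by
  classical
  set F := GaloisField 2 b
  set k := 2 ^ r with hk
  have hk2 : 2 ≤ k := by
    calc 2 = 2 ^ 1 := by norm_num
    _ ≤ 2 ^ r := Nat.pow_le_pow_right (by norm_num) hr
  have h2k : 2 * k ≤ n := by
    have : 2 ^ (r + 1) = 2 * k := by rw [hk, pow_succ]; ring
    omega
  have hkn : k < n := by omega
  have h1n : 1 < n := by omega
  have h0n : 0 < n := by omega
  -- injection picking the support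
  set ι : Fin k → Fin n := fun t => if h : t.val = 0 then ⟨0, h0n⟩ else ⟨t.val + 1, by omega⟩
    with hι
  have hιinj : Function.Injective ι := by
    intro t u htu
    simp only [hι] at htu
    split_ifs at htu with h1 h2 h2 <;>
      simp only [Fin.mk.injEq] at htu <;> exact Fin.ext (by omega)
  set s : Finset (Fin n) := Finset.univ.image ι with hs
  have hscard : s.card = k := by
    rw [hs, Finset.card_image_of_injective _ hιinj, Finset.card_univ, Fintype.card_fin]
  have h0s : (⟨0, h0n⟩ : Fin n) ∈ s := by
    rw [hs]
    exact Finset.mem_image.mpr ⟨⟨0, by omega⟩, Finset.mem_univ _, by simp [hι]⟩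
  set w : Fin n → F := fun x => if x ∈ s then (1 : F) else 0 with hw
  have hw0 : w ⟨0, h0n⟩ = 1 := by simp [hw, h0s]
  have hcard : Fintype.card {x // w x ≠ 0} = k := by
    have he : ∀ x : Fin n, w x ≠ 0 ↔ x ∈ s := by
      intro x; simp only [hw]; split_ifs with h <;> simp [h]
    calc Fintype.card {x // w x ≠ 0} = Fintype.card {x // x ∈ s} :=
          Fintype.card_congr (Equiv.subtypeEquivRight he)
    _ = s.card := Fintype.card_coe s
    _ = k := hscard
  set σ : Equiv.Perm (Fin n) := Equiv.swap ⟨0, h0n⟩ ⟨1, h1n⟩ with hσ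
  set A₀ : Matrix (Fin n) (Fin n) F := (Matrix.diagonal w).submatrix (Equiv.refl _) σ with hA₀
  have hrankA₀ : A₀.rank = k := by
    rw [hA₀, Matrix.rank_submatrix, Matrix.rank_diagonal, hcard]
  have hA₀col : ∀ x : Fin n, A₀ x ⟨1, h1n⟩ = if x = ⟨0, h0n⟩ then (1 : F) else 0 := by
    intro x
    rw [hA₀]
    simp only [Matrix.submatrix_apply, Equiv.refl_apply, hσ, Equiv.swap_apply_right,
      Matrix.diagonal_apply]
    split_ifs with h1 h2 h2 <;> simp_all [hw0]
  -- main step: each stdBasisMatrix is in the span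
  have key : ∀ (i j : Fin n) (a : F),
      Matrix.single i j a ∈ Submodule.span (ZMod 2)
        {M : Matrix (Fin n) (Fin n) F | M.rank = 2 ^ r} := by
    intro i j a
    set B₀ : Matrix (Fin n) (Fin n) F := A₀ * Matrix.transvection ⟨1, h1n⟩ ⟨0, h0n⟩ a with hB₀
    have hne : (⟨1, h1n⟩ : Fin n) ≠ ⟨0, h0n⟩ := by simp [Fin.ext_iff]
    have hrankB₀ : B₀.rank = k := by
      rw [hB₀, Matrix.rank_mul_eq_left_of_isUnit_det, hrankA₀]
      rw [Matrix.det_transvection_of_ne _ _ hne]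
      exact isUnit_one
    have hB₀eq : B₀ = A₀ + Matrix.single ⟨0, h0n⟩ ⟨0, h0n⟩ a := by
      ext x y
      by_cases hy : y = (⟨0, h0n⟩ : Fin n)
      · subst hy
        rw [hB₀, Matrix.mul_transvection_apply_same, Matrix.add_apply, hA₀col x]
        by_cases hx : x = (⟨0, h0n⟩ : Fin n)
        · subst hx
          rw [Matrix.single_apply_same, if_pos rfl, mul_one]
        · rw [if_neg hx, Matrix.single_apply_of_row_ne (Ne.symm hx) _ _ _, mul_zero]
      · rw [hB₀, Matrix.mul_transvection_apply_of_ne _ _ x y hy a A₀, Matrix.add_apply,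
          Matrix.single_apply_of_col_ne _ _ (Ne.symm hy) _, add_zero]
    set e₁ : Equiv.Perm (Fin n) := Equiv.swap ⟨0, h0n⟩ i with he₁
    set e₂ : Equiv.Perm (Fin n) := Equiv.swap ⟨0, h0n⟩ j with he₂
    have hsum : A₀.submatrix e₁ e₂ + B₀.submatrix e₁ e₂ = Matrix.single i j a := by
      ext x y
      simp only [Matrix.add_apply, Matrix.submatrix_apply, hB₀eq, Matrix.add_apply]
      rw [← add_assoc, CharTwo.add_self_eq_zero, zero_add]
      rw [Matrix.single, Matrix.single]
      simp only [Matrix.of_apply]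
      congr 1
      have h1 : e₁ x = ⟨0, h0n⟩ ↔ x = i := by
        rw [he₁, Equiv.swap_apply_eq_iff, Equiv.swap_apply_left]
      have h2 : e₂ y = ⟨0, h0n⟩ ↔ y = j := by
        rw [he₂, Equiv.swap_apply_eq_iff, Equiv.swap_apply_left]
      rw [eq_iff_iff]
      constructor
      · rintro ⟨u, v⟩
        exact ⟨(h1.mp u.symm).symm, (h2.mp v.symm).symm⟩
      · rintro ⟨u, v⟩
        exact ⟨(h1.mpr u.symm).symm, (h2.mpr v.symm).symm⟩
    rw [← hsum]
    have hmem : ∀ M : Matrix (Fin n) (Fin n) F, M.rank = k →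
        M.submatrix e₁ e₂ ∈ {M : Matrix (Fin n) (Fin n) F | M.rank = 2 ^ r} := by
      intro M hM
      simp only [Set.mem_setOf_eq, Matrix.rank_submatrix, hM, hk]
    exact Submodule.add_mem _
      (Submodule.subset_span (hmem _ hrankA₀)) (Submodule.subset_span (hmem _ hrankB₀))
  rw [eq_top_iff]
  intro M _
  rw [Matrix.matrix_eq_sum_single M]
  exact Submodule.sum_mem _ fun i _ => Submodule.sum_mem _ fun j _ => key i j (M i j)
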